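/- Let (X, U, V, C, S) be a GSVD of the pair (A, B), and let U⊥ ∈ ℝ^{m×(m−n)} satisfy Uᵀ U⊥ = 0 and U⊥ᵀ U⊥ = I_{m−n}. Set Σ = C S⁻¹ and W = X S⁻¹. Define the augmented matrices Â = [[0, A], [Aᵀ, 0]] ∈ ℝ^{(m+n)×(m+n)} and B̂ = [[I_m, 0], [0, BᵀB]] ∈ ℝ^{(m+n)×(m+n)}, the (m+n)×(m+n) block matrix Y = [[(1/√2)U, (1/√2)U, U⊥], [(1/√2)W, −(1/√2)W, 0]] (row blocks of sizes m and n, column blocks of sizes n, n and m−n), and the block-diagonal matrix Σ̂ = diag(Σ, −Σ, 0_{m−n}). Then Â Y = B̂ Y Σ̂ and Yᵀ B̂ Y = I_{m+n}. -/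

import Mathlib

open Matrix

private lemma myaux_smul_fromCols {m n1 n2 : Type*} (c : ℝ) (A : Matrix m n1 ℝ)
    (B : Matrix m n2 ℝ) : c • Matrix.fromCols A B = Matrix.fromCols (c • A) (c • B) := by
  ext _ (_ | _) <;> simp

private lemma myaux_smul_fromRows {m1 m2 n : Type*} (c : ℝ) (A : Matrix m1 n ℝ)
    (B : Matrix m2 n ℝ) : c • Matrix.fromRows A B = Matrix.fromRows (c • A) (c • B) := by
  ext (_ | _) _ <;> simp

private lemma myaux_fromRows_add {m1 m2 n : Type*} (A C : Matrix m1 n ℝ) (B D : Matrix m2 n ℝ) :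
    Matrix.fromRows A B + Matrix.fromRows C D = Matrix.fromRows (A + C) (B + D) := by
  ext (_ | _) _ <;> simp

private lemma myaux_fromCols_add {m n1 n2 : Type*} (A C : Matrix m n1 ℝ)
    (B D : Matrix m n2 ℝ) :
    Matrix.fromCols A B + Matrix.fromCols C D = Matrix.fromCols (A + C) (B + D) := by
  ext _ (_ | _) <;> simp

/-- GSVD of (A,B) gives the generalized eigendecomposition
`Â Y = B̂ Y Σ̂` with `Yᵀ B̂ Y = I` for the first augmented pair. -/
theorem stmt_0 {m n p : ℕ} (hmn : n ≤ m) (hpn : n ≤ p)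
    (A : Matrix (Fin m) (Fin n) ℝ) (B : Matrix (Fin p) (Fin n) ℝ)
    (X : Matrix (Fin n) (Fin n) ℝ)
    (U : Matrix (Fin m) (Fin n) ℝ) (V : Matrix (Fin p) (Fin n) ℝ)
    (a b : Fin n → ℝ)
    (hX : IsUnit X.det)
    (hU : Uᵀ * U = 1) (hV : Vᵀ * V = 1)
    (ha : ∀ i, 0 < a i) (hb : ∀ i, 0 < b i)
    (hab : ∀ i, a i ^ 2 + b i ^ 2 = 1)
    (hA : A = U * Matrix.diagonal a * X⁻¹)
    (hB : B = V * Matrix.diagonal b * X⁻¹)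
    (Uperp : Matrix (Fin m) (Fin (m - n)) ℝ)
    (hUp1 : Uᵀ * Uperp = 0) (hUp2 : Uperpᵀ * Uperp = 1)
    (Sig W : Matrix (Fin n) (Fin n) ℝ)
    (hSig : Sig = Matrix.diagonal a * (Matrix.diagonal b)⁻¹)
    (hW : W = X * (Matrix.diagonal b)⁻¹)
    (Ahat Bhat : Matrix (Fin m ⊕ Fin n) (Fin m ⊕ Fin n) ℝ)
    (hAhat : Ahat = Matrix.fromBlocks 0 A Aᵀ 0)
    (hBhat : Bhat = Matrix.fromBlocks 1 0 0 (Bᵀ * B))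
    (Y : Matrix (Fin m ⊕ Fin n) ((Fin n ⊕ Fin n) ⊕ Fin (m - n)) ℝ)
    (hY : Y = Matrix.fromBlocks
      (Matrix.fromCols ((Real.sqrt 2)⁻¹ • U) ((Real.sqrt 2)⁻¹ • U)) Uperp
      (Matrix.fromCols ((Real.sqrt 2)⁻¹ • W) (-((Real.sqrt 2)⁻¹ • W))) 0)
    (Sighat : Matrix ((Fin n ⊕ Fin n) ⊕ Fin (m - n)) ((Fin n ⊕ Fin n) ⊕ Fin (m - n)) ℝ)
    (hSighat : Sighat = Matrix.fromBlocks (Matrix.fromBlocks Sig 0 0 (-Sig)) 0 0 0) :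
    Ahat * Y = Bhat * Y * Sighat ∧ Yᵀ * Bhat * Y = 1 := by
  set c : ℝ := (Real.sqrt 2)⁻¹ with hc
  set d : Matrix (Fin n) (Fin n) ℝ := Matrix.diagonal a with hd
  set e : Matrix (Fin n) (Fin n) ℝ := Matrix.diagonal b with he
  have hc2 : c * c = 1/2 := by
    rw [hc, ← mul_inv, Real.mul_self_sqrt (by norm_num)]
    norm_num
  have hedet : IsUnit e.det := by
    rw [he, Matrix.det_diagonal]
    exact isUnit_iff_ne_zero.2 (Finset.prod_ne_zero_iff.2 fun i _ => (hb i).ne')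
  have he1 : e * e⁻¹ = 1 := mul_nonsing_inv e hedet
  have he2 : e⁻¹ * e = 1 := nonsing_inv_mul e hedet
  have hX1 : X * X⁻¹ = 1 := mul_nonsing_inv X hX
  have hX2 : X⁻¹ * X = 1 := nonsing_inv_mul X hX
  have hXT : Xᵀ * X⁻¹ᵀ = 1 := by rw [← Matrix.transpose_mul, hX2, Matrix.transpose_one]
  have heT : eᵀ = e := by rw [he, Matrix.diagonal_transpose]
  have heinvT : e⁻¹ᵀ = e⁻¹ := by rw [Matrix.transpose_nonsing_inv, heT]
  have hde : d * e = e * d := by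
    rw [hd, he, Matrix.diagonal_mul_diagonal, Matrix.diagonal_mul_diagonal]
    simp [mul_comm]
  -- key block facts
  have hAW : A * W = U * Sig := by
    rw [hA, hW, hSig]
    simp only [Matrix.mul_assoc]
    rw [← Matrix.mul_assoc X⁻¹ X, hX2, Matrix.one_mul]
  have hAT : Aᵀ = X⁻¹ᵀ * d * Uᵀ := by
    rw [hA, Matrix.transpose_mul, Matrix.transpose_mul, hd, Matrix.diagonal_transpose,
      Matrix.mul_assoc]
  have hATU : Aᵀ * U = X⁻¹ᵀ * d := by
    rw [hAT, Matrix.mul_assoc, hU, Matrix.mul_one]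
  have hATUp : Aᵀ * Uperp = 0 := by
    rw [hAT, Matrix.mul_assoc, hUp1, Matrix.mul_zero]
  have hUpTU : Uperpᵀ * U = 0 := by
    have := congrArg Matrix.transpose hUp1
    rwa [Matrix.transpose_mul, Matrix.transpose_transpose, Matrix.transpose_zero] at this
  have hBTB : Bᵀ * B = X⁻¹ᵀ * (e * e) * X⁻¹ := by
    rw [hB, Matrix.transpose_mul, Matrix.transpose_mul, heT]
    simp only [Matrix.mul_assoc]
    rw [← Matrix.mul_assoc Vᵀ V, hV, Matrix.one_mul]
  have hR : Bᵀ * B * W = X⁻¹ᵀ * e := by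
    rw [hBTB, hW, Matrix.mul_assoc, Matrix.mul_assoc, ← Matrix.mul_assoc X⁻¹, hX2,
      Matrix.one_mul, Matrix.mul_assoc e, he1, Matrix.mul_one]
  have heSig : e * Sig = d := by
    rw [hSig, ← Matrix.mul_assoc, ← hde, Matrix.mul_assoc, he1, Matrix.mul_one]
  have hRS : X⁻¹ᵀ * e * Sig = X⁻¹ᵀ * d := by
    rw [Matrix.mul_assoc, heSig]
  have hWT : Wᵀ * (X⁻¹ᵀ * e) = 1 := by
    rw [hW, Matrix.transpose_mul, heinvT, Matrix.mul_assoc, ← Matrix.mul_assoc Xᵀ, hXT,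
      Matrix.one_mul, he2]
  subst hAhat hBhat hY hSighat
  have hR' : Bᵀ * (B * W) = X⁻¹ᵀ * e := by
    rw [← Matrix.mul_assoc, hR]
  have hWBW : Wᵀ * (Bᵀ * B) * W = 1 := by
    rw [Matrix.mul_assoc, hR, hWT]
  have hhalf : (1/2 : ℝ) • (1 : Matrix (Fin n) (Fin n) ℝ) + (1/2 : ℝ) • 1 = 1 := by
    rw [← add_smul]; norm_num
  constructor
  · rw [Matrix.fromBlocks_multiply, Matrix.fromBlocks_multiply, Matrix.fromBlocks_multiply]
    simp [Matrix.mul_smul, Matrix.smul_mul, hAW, hATU, hATUp, hR, hR', hRS, Matrix.mul_assoc,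
      Matrix.fromCols_mul_fromBlocks]
  · rw [Matrix.fromBlocks_transpose, Matrix.fromBlocks_multiply, Matrix.fromBlocks_multiply]
    simp only [Matrix.transpose_fromCols, Matrix.transpose_smul, Matrix.transpose_neg,
      Matrix.transpose_zero, Matrix.fromRows_mul, Matrix.fromRows_mul_fromCols,
      Matrix.smul_mul, Matrix.mul_smul, Matrix.neg_mul, Matrix.mul_neg, Matrix.mul_one,
      Matrix.one_mul, Matrix.mul_zero, Matrix.zero_mul, add_zero, zero_add, neg_neg,
      smul_smul, hc2, hU, hUp1, hUp2, hUpTU, hWBW, hhalf, smul_zero,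
      Matrix.mul_fromCols, Matrix.fromRows_zero, Matrix.fromCols_zero,
      myaux_smul_fromCols, myaux_fromRows_add, myaux_fromCols_add,
      Matrix.fromRows_fromCols_eq_fromBlocks, Matrix.fromCols_fromRows_eq_fromBlocks,
      myaux_smul_fromRows, Matrix.fromRows_neg, Matrix.fromCols_neg, smul_neg,
      Matrix.fromBlocks_add,
      add_neg_cancel, neg_add_cancel]
    rw [← Matrix.fromBlocks_one]
    congr 1
    rw [← Matrix.fromBlocks_one]
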